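/- Let G be a Hausdorff topological group and T₁, …, Tₙ ⊆ G be subsets that are each locally cofinite at 0 and nowhere dense in G. Then Eₙ = T₁ + ⋯ + Tₙ is nowhere dense in G. -/

import Mathlib

open Set Pointwise

set_option linter.unusedSectionVars false

def LCF0 {G : Type*} [AddGroup G] [TopologicalSpace G] (T : Set G) : Prop :=
  (0 : G) ∉ T ∧ ∀ u : Set G, IsOpen u → (0 : G) ∈ u → (T \ u).Finite

section Aux

variable {G : Type*} [AddGroup G] [TopologicalSpace G] [IsTopologicalAddGroup G] [T2Space G]

lemma lcf0_compact {T : Set G} (hT : LCF0 T) : IsCompact (insert (0:G) T) := by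
  classical
  refine isCompact_of_finite_subcover fun {ι} U hU hcov => ?_
  obtain ⟨i0, hi0⟩ := mem_iUnion.mp (hcov (mem_insert _ _))
  have hfin : (T \ U i0).Finite := hT.2 (U i0) (hU i0) hi0
  choose f hf using fun x : ↥(T \ U i0) => mem_iUnion.mp (hcov (mem_insert_of_mem _ x.2.1))
  refine ⟨insert i0 (hfin.toFinset.attach.image fun x => f ⟨x.1, (hfin.mem_toFinset.mp x.2)⟩), ?_⟩
  intro x hx
  rcases eq_or_mem_of_mem_insert hx with rfl | hxT
  · exact mem_iUnion₂.mpr ⟨i0, Finset.mem_insert_self _ _, hi0⟩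
  by_cases hxu : x ∈ U i0
  · exact mem_iUnion₂.mpr ⟨i0, Finset.mem_insert_self _ _, hxu⟩
  · have hxd : x ∈ T \ U i0 := ⟨hxT, hxu⟩
    refine mem_iUnion₂.mpr ⟨f ⟨x, hxd⟩, ?_, hf ⟨x, hxd⟩⟩
    refine Finset.mem_insert.mpr (Or.inr ?_)
    rw [Finset.mem_image]
    exact ⟨⟨x, hfin.mem_toFinset.mpr hxd⟩, Finset.mem_attach _ _, rfl⟩

lemma nwd_union {X : Type*} [TopologicalSpace X] {s t : Set X}
    (hs : IsNowhereDense s) (ht : IsNowhereDense t) : IsNowhereDense (s ∪ t) := by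
  rw [IsNowhereDense, closure_union]
  have h1 : interior (closure s ∪ closure t) \ closure s ⊆ interior (closure t) :=
    interior_maximal (fun x hx => (interior_subset hx.1).resolve_left hx.2)
      (isOpen_interior.sdiff isClosed_closure)
  rw [ht] at h1
  have h2 : interior (closure s ∪ closure t) ⊆ closure s := by
    intro x hx
    by_contra hxs
    exact h1 ⟨hx, hxs⟩
  have h3 : interior (closure s ∪ closure t) ⊆ interior (closure s) :=
    interior_maximal h2 isOpen_interior
  rw [hs] at h3
  exact eq_empty_of_subset_empty h3

lemma nwd_addLeft (a : G) {K : Set G} (hK : IsNowhereDense K) :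
    IsNowhereDense ((a + ·) '' K) := by
  have : (a + ·) '' K = (Homeomorph.addLeft a) '' K := rfl
  rw [IsNowhereDense, this, ← Homeomorph.image_closure, ← Homeomorph.image_interior, hK,
    image_empty]

lemma nwd_finite_add {F K : Set G} (hF : F.Finite) (hK : IsNowhereDense K) :
    IsNowhereDense (F + K) := by
  refine Set.Finite.induction_on F hF ?_ ?_
  · rw [Set.empty_add]; exact isNowhereDense_empty
  · intro a F' _ _ ih
    rw [Set.insert_eq, Set.union_add, Set.singleton_add]
    exact nwd_union (nwd_addLeft a hK) ih

lemma lemA {T K : Set G} (hT : LCF0 T) (hK : IsCompact K) (hKnwd : IsNowhereDense K) :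
    IsNowhereDense (insert 0 T + K) := by
  have hC : IsCompact (insert (0:G) T) := lcf0_compact hT
  have hCK : IsCompact (insert (0:G) T + K) := hC.add hK
  rw [hCK.isClosed.isNowhereDense_iff]
  by_contra hne
  obtain ⟨x, hx⟩ := nonempty_iff_ne_empty.mpr hne
  set W := interior (insert (0:G) T + K) with hWdef
  have hWopen : IsOpen W := isOpen_interior
  have hWsub : W ⊆ insert 0 T + K := interior_subset
  have hKcl : IsClosed K := hK.isClosed
  have hWK : ¬ W ⊆ K := by
    intro h
    have h' : W ⊆ interior (closure K) := interior_maximal (h.trans subset_closure) hWopen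
    rw [hKnwd] at h'
    exact h' hx
  obtain ⟨y, hyW, hyK⟩ := not_subset.mp hWK
  have hmem : Kᶜ ∩ W ∈ nhds y :=
    Filter.inter_mem (hKcl.isOpen_compl.mem_nhds hyK) (hWopen.mem_nhds hyW)
  obtain ⟨t, htny, htcl, htsub⟩ := exists_mem_nhds_isClosed_subset hmem
  set V := interior t with hVdef
  have hyV : y ∈ V := mem_interior_iff_mem_nhds.mpr htny
  have hVt : closure V ⊆ t := closure_minimal interior_subset htcl
  have hVK : ∀ z ∈ closure V, z ∉ K := fun z hz => (htsub (hVt hz)).1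
  have hVW : V ⊆ W := fun z hz => (htsub (interior_subset hz)).2
  have hclaim : (0:G) ∈ closure (V + (-K)) := by
    rw [mem_closure_iff]
    intro u hu hu0
    have hFfin : ((insert (0:G) (T \ u))).Finite := (hT.2 u hu hu0).insert 0
    have hFnwd : IsNowhereDense (insert (0:G) (T \ u) + K) := nwd_finite_add hFfin hKnwd
    have hns : ¬ V ⊆ insert (0:G) (T \ u) + K := by
      intro h
      have h' : V ⊆ interior (closure (insert (0:G) (T \ u) + K)) :=
        interior_maximal (h.trans subset_closure) isOpen_interior
      rw [hFnwd] at h'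
      exact h' hyV
    obtain ⟨z, hzV, hzN⟩ := not_subset.mp hns
    obtain ⟨c, hc, k, hk, hck⟩ := hWsub (hVW hzV)
    have hcF : c ∉ insert (0:G) (T \ u) := fun h => hzN (hck ▸ Set.add_mem_add h hk)
    have hcu : c ∈ u := by
      rcases hc with rfl | hcT
      · exact absurd (mem_insert _ _) hcF
      · by_contra hcu
        exact hcF (mem_insert_of_mem _ ⟨hcT, hcu⟩)
    refine ⟨c, hcu, ?_⟩
    have hcz : c = z + (-k) := eq_add_neg_of_add_eq hck
    rw [hcz]
    exact Set.add_mem_add hzV (Set.neg_mem_neg.mpr hk)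
  have hVcomp : IsCompact (closure V) :=
    hCK.of_isClosed_subset isClosed_closure (closure_minimal (hVW.trans hWsub) hCK.isClosed)
  have hsumcl : IsClosed (closure V + (-K)) := (hVcomp.add hK.neg).isClosed
  have h0mem : (0:G) ∈ closure V + (-K) := by
    have hsub2 : V + (-K) ⊆ closure V + (-K) := Set.add_subset_add_right subset_closure
    have := closure_mono hsub2 hclaim
    rwa [hsumcl.closure_eq] at this
  obtain ⟨v, hv, nk, hnk, hvnk⟩ := h0mem
  have hveq : v = -nk := eq_neg_of_add_eq_zero_left hvnk
  rw [Set.mem_neg] at hnk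
  exact hVK v hv (hveq ▸ hnk)

lemma fold_lemma (h0 : ¬ IsOpen ({(0:G)} : Set G)) :
    ∀ L : List (Set G), (∀ A ∈ L, LCF0 A) →
      IsCompact (L.foldr (fun A S => insert 0 A + S) {(0:G)}) ∧
      IsNowhereDense (L.foldr (fun A S => insert 0 A + S) {(0:G)}) := by
  intro L
  induction L with
  | nil =>
    intro _
    simp only [List.foldr_nil]
    refine ⟨isCompact_singleton, ?_⟩
    rw [isClosed_singleton.isNowhereDense_iff]
    by_contra hne
    obtain ⟨x, hx⟩ := nonempty_iff_ne_empty.mpr hne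
    have hi : interior ({(0:G)} : Set G) = {0} := by
      have h1 : interior ({(0:G)} : Set G) ⊆ {0} := interior_subset
      have : x = 0 := h1 hx
      subst this
      exact Subset.antisymm h1 (singleton_subset_iff.mpr hx)
    exact h0 (hi ▸ isOpen_interior)
  | cons A L ih =>
    intro h
    obtain ⟨hc, hnwd⟩ := ih fun B hB => h B (List.mem_cons_of_mem _ hB)
    have hA := h A (List.mem_cons_self)
    exact ⟨(lcf0_compact hA).add hc, lemA hA hc hnwd⟩

lemma mem_fold : ∀ (n : ℕ) (T : Fin n → Set G) (t : Fin n → G), (∀ i, t i ∈ T i) →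
    (List.ofFn t).sum ∈ (List.ofFn T).foldr (fun A S => insert 0 A + S) {(0:G)}
  | 0, T, t, _ => by simp
  | (n+1), T, t, h => by
    rw [List.ofFn_succ, List.ofFn_succ, List.sum_cons, List.foldr_cons]
    exact Set.add_mem_add (mem_insert_of_mem _ (h 0))
      (mem_fold n (fun i => T i.succ) (fun i => t i.succ) fun i => h i.succ)

end Aux

theorem stmt_7 {G : Type*} [AddGroup G] [TopologicalSpace G] [IsTopologicalAddGroup G]
    [T2Space G] (n : ℕ) (hn : 1 ≤ n) (T : Fin n → Set G)
    (hT : ∀ i, LCF0 (T i)) (hTnwd : ∀ i, IsNowhereDense (T i)) :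
    IsNowhereDense {g : G | ∃ t : Fin n → G,
      (∀ i, t i ∈ T i) ∧ (List.ofFn t).sum = g} := by
  by_cases h0 : IsOpen ({(0:G)} : Set G)
  · have hT0 : T ⟨0, hn⟩ = ∅ := by
      by_contra hne
      obtain ⟨x, hx⟩ := nonempty_iff_ne_empty.mpr hne
      have hxo : IsOpen ({x} : Set G) := by
        have := (Homeomorph.addLeft x).isOpenMap _ h0
        simpa using this
      have hxi : x ∈ interior (closure (T ⟨0, hn⟩)) :=
        interior_maximal (singleton_subset_iff.mpr (subset_closure hx)) hxo rfl
      rw [hTnwd ⟨0, hn⟩] at hxi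
      exact hxi
    have hE : {g : G | ∃ t : Fin n → G,
        (∀ i, t i ∈ T i) ∧ (List.ofFn t).sum = g} = ∅ := by
      ext g
      simp only [mem_setOf_eq, mem_empty_iff_false, iff_false, not_exists]
      rintro t ⟨ht, -⟩
      have := ht ⟨0, hn⟩
      rw [hT0] at this
      exact this
    rw [hE]
    exact isNowhereDense_empty
  · obtain ⟨-, hnwd⟩ := fold_lemma h0 (List.ofFn T) (by
      intro A hA
      obtain ⟨i, rfl⟩ := List.mem_ofFn.mp hA
      exact hT i)
    have hsub : {g : G | ∃ t : Fin n → G,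
        (∀ i, t i ∈ T i) ∧ (List.ofFn t).sum = g} ⊆
        (List.ofFn T).foldr (fun A S => insert 0 A + S) {(0:G)} := by
      rintro g ⟨t, ht, rfl⟩
      exact mem_fold n T t ht
    rw [IsNowhereDense] at hnwd ⊢
    exact eq_empty_of_subset_empty ((interior_mono (closure_mono hsub)).trans (by rw [hnwd]))
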